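/- If X is a standard normal random variable and Ψ(t,x) = (tx - (t²+1))·cos(tx) + (tx + (t²+1))·sin(tx), then for every real t, E[Ψ(t,X)] = -exp(-t²/2). -/

import Mathlib

open MeasureTheory ProbabilityTheory Real Filter
open scoped NNReal ENNReal

noncomputable def E' (x : ℝ) : ℝ := Real.exp (-x^2/2)

lemma contE : Continuous E' := by unfold E'; continuity

lemma intE : Integrable E' := by
  have := integrable_exp_neg_mul_sq (b := (1/2:ℝ)) (by norm_num)
  refine this.congr (Eventually.of_forall fun x => ?_)
  unfold E'; ring_nf

lemma intxE : Integrable (fun x : ℝ => x * E' x) := by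
  have := integrable_mul_exp_neg_mul_sq (b := (1/2:ℝ)) (by norm_num)
  refine this.congr (Eventually.of_forall fun x => ?_)
  unfold E'; ring_nf

lemma int_bdd (f : ℝ → ℝ) (c : ℝ) (hf : Continuous f) (h : ∀ x, |f x| ≤ c) :
    Integrable (fun x => f x * E' x) := by
  refine ((intE.const_mul c).mono' (hf.mul contE).aestronglyMeasurable
    (Eventually.of_forall fun x => ?_))
  have hE : 0 ≤ E' x := (Real.exp_pos _).le
  rw [Real.norm_eq_abs, abs_mul, _root_.abs_of_nonneg hE]
  exact mul_le_mul_of_nonneg_right (h x) hE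

lemma int_bdd_x (f : ℝ → ℝ) (c : ℝ) (hf : Continuous f) (h : ∀ x, |f x| ≤ c) :
    Integrable (fun x => f x * (x * E' x)) := by
  refine ((intxE.norm.const_mul c).mono' (hf.mul (continuous_id.mul contE)).aestronglyMeasurable
    (Eventually.of_forall fun x => ?_))
  rw [Real.norm_eq_abs, abs_mul]
  exact mul_le_mul_of_nonneg_right (h x) (abs_nonneg _)

lemma gauss_cos_sin (t : ℝ) :
    (∫ x : ℝ, Real.cos (t*x) * E' x) = Real.sqrt (2*π) * Real.exp (-t^2/2)
    ∧ (∫ x : ℝ, Real.sin (t*x) * E' x) = 0 := by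
  have hb : (0:ℝ) < (1/2 : ℂ).re := by norm_num
  have h := fourierIntegral_gaussian (b := 1/2) hb (t : ℂ)
  have hre : ∀ x : ℝ, Complex.exp (Complex.I * t * x) * Complex.exp (-(1/2:ℂ) * x^2)
      = ((Real.cos (t*x) * E' x : ℝ) : ℂ) + ((Real.sin (t*x) * E' x : ℝ) : ℂ) * Complex.I := by
    intro x
    rw [show (Complex.I * (t:ℂ) * x : ℂ) = ((t*x : ℝ) : ℂ) * Complex.I by push_cast; ring,
      Complex.exp_mul_I,
      show (-(1/2:ℂ) * (x:ℂ)^2) = ((-x^2/2 : ℝ) : ℂ) by push_cast; ring,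
      ← Complex.ofReal_exp, ← Complex.ofReal_cos, ← Complex.ofReal_sin]
    unfold E'; push_cast; ring
  have icos : Integrable (fun x => Real.cos (t*x) * E' x) :=
    int_bdd _ 1 (by continuity) fun x => Real.abs_cos_le_one _
  have isin : Integrable (fun x => Real.sin (t*x) * E' x) :=
    int_bdd _ 1 (by continuity) fun x => Real.abs_sin_le_one _
  have hf1 : Integrable (fun x : ℝ => ((Real.cos (t*x) * E' x : ℝ) : ℂ)) := icos.ofReal
  have hf2 : Integrable (fun x : ℝ => ((Real.sin (t*x) * E' x : ℝ) : ℂ) * Complex.I) :=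
    (isin.ofReal).mul_const Complex.I
  have hco1 : (∫ x : ℝ, ((Real.cos (t*x) * E' x : ℝ) : ℂ)) = ((∫ x : ℝ, Real.cos (t*x) * E' x : ℝ) : ℂ) :=
    integral_ofReal
  have hco2 : (∫ x : ℝ, ((Real.sin (t*x) * E' x : ℝ) : ℂ)) = ((∫ x : ℝ, Real.sin (t*x) * E' x : ℝ) : ℂ) :=
    integral_ofReal
  rw [show (fun x : ℝ => Complex.exp (Complex.I * t * x) * Complex.exp (-(1/2:ℂ) * x^2))
      = fun x : ℝ => ((Real.cos (t*x) * E' x : ℝ) : ℂ) + ((Real.sin (t*x) * E' x : ℝ) : ℂ) * Complex.I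
      from funext hre] at h
  rw [integral_add hf1 hf2, MeasureTheory.integral_mul_const, hco1, hco2] at h
  have hrhs : ((π:ℂ) / (1/2)) ^ (1/2 : ℂ) * Complex.exp (-(t:ℂ) ^ 2 / (4 * (1/2)))
      = ((Real.sqrt (2*π) * Real.exp (-t^2/2) : ℝ) : ℂ) := by
    rw [show (-(t:ℂ)^2/(4 * (1/2))) = ((-t^2/2 : ℝ) : ℂ) by push_cast; ring,
      ← Complex.ofReal_exp,
      show ((π:ℂ) / (1/2)) = ((2*π : ℝ) : ℂ) by push_cast; ring,
      show ((1/2 : ℂ)) = (((1/2:ℝ)) : ℂ) by norm_num,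
      ← Complex.ofReal_cpow (by positivity), ← Complex.ofReal_mul]
    norm_num [← Real.sqrt_eq_rpow]
  rw [hrhs] at h
  have hA := congrArg Complex.re h
  have hB := congrArg Complex.im h
  simp only [Complex.add_re, Complex.add_im, Complex.mul_re, Complex.mul_im,
    Complex.ofReal_re, Complex.ofReal_im, Complex.I_re, Complex.I_im,
    mul_zero, mul_one, zero_mul, one_mul, sub_zero, zero_sub, add_zero, zero_add] at hA hB
  exact ⟨by linarith, by linarith⟩

lemma hasDerivF (t x : ℝ) :
    HasDerivAt (fun y => -t * (Real.cos (t*y) + Real.sin (t*y)) * E' y)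
      (((t*x - (t^2+1)) * Real.cos (t*x) + (t*x + (t^2+1)) * Real.sin (t*x)
        + Real.cos (t*x) - Real.sin (t*x)) * E' x) x := by
  have hty : HasDerivAt (fun y : ℝ => t*y) t x := by simpa using (hasDerivAt_id x).const_mul t
  have hE : HasDerivAt E' (-x * E' x) x := by
    have h1 : HasDerivAt (fun y : ℝ => -y^2/2) (-x) x := by
      have := (hasDerivAt_pow 2 x).neg.div_const 2
      refine this.congr_deriv ?_
      push_cast; ring
    show HasDerivAt (fun y => Real.exp (-y^2/2)) _ x
    simpa [E', mul_comm] using h1.exp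
  have h2 := ((hty.cos.add hty.sin).const_mul (-t)).mul hE
  refine h2.congr_deriv ?_
  simp only [Pi.add_apply]
  ring

lemma tendsE_top : Filter.Tendsto E' atTop (nhds 0) := by
  have hsq : Filter.Tendsto (fun x : ℝ => x^2) atTop atTop := tendsto_pow_atTop (two_ne_zero)
  have h1 : Filter.Tendsto (fun x : ℝ => -x^2/2) atTop atBot :=
    Filter.Tendsto.atBot_div_const (by norm_num) ((tendsto_neg_atTop_atBot).comp hsq)
  exact Real.tendsto_exp_atBot.comp h1

lemma tendsE_bot : Filter.Tendsto E' atBot (nhds 0) := by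
  have hsq : Filter.Tendsto (fun x : ℝ => x^2) atBot atTop := by
    have := (tendsto_pow_atTop (n := 2) (two_ne_zero)).comp
      (tendsto_neg_atBot_atTop : Filter.Tendsto (fun x : ℝ => -x) atBot atTop)
    simpa [Function.comp_def, neg_sq] using this
  have h1 : Filter.Tendsto (fun x : ℝ => -x^2/2) atBot atBot :=
    Filter.Tendsto.atBot_div_const (by norm_num) ((tendsto_neg_atTop_atBot).comp hsq)
  exact Real.tendsto_exp_atBot.comp h1

lemma tendsF (t : ℝ) (l : Filter ℝ) (hl : Filter.Tendsto E' l (nhds 0)) :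
    Filter.Tendsto (fun y => -t * (Real.cos (t*y) + Real.sin (t*y)) * E' y) l (nhds 0) := by
  rw [tendsto_zero_iff_abs_tendsto_zero]
  refine squeeze_zero (fun y => abs_nonneg _) (g := fun y => (2*|t|) * E' y) (fun y => ?_)
    (by simpa using hl.const_mul (2*|t|))
  show |(-t * (Real.cos (t*y) + Real.sin (t*y)) * E' y)| ≤ 2 * |t| * E' y
  rw [abs_mul, abs_mul, abs_neg, _root_.abs_of_nonneg (show (0:ℝ) ≤ E' y from (Real.exp_pos _).le)]
  have h1 : |Real.cos (t*y) + Real.sin (t*y)| ≤ 2 :=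
    (abs_add_le _ _).trans (by nlinarith [Real.abs_cos_le_one (t*y), Real.abs_sin_le_one (t*y)])
  have := (Real.exp_pos (-y^2/2)).le
  calc |t| * |Real.cos (t*y) + Real.sin (t*y)| * E' y
      ≤ |t| * 2 * E' y := by
        apply mul_le_mul_of_nonneg_right _ (Real.exp_pos _).le
        exact mul_le_mul_of_nonneg_left h1 (abs_nonneg t)
    _ = 2*|t| * E' y := by ring

theorem stmt_4 (Ψ : ℝ → ℝ → ℝ)
    (hΨ : ∀ t x : ℝ, Ψ t x = (t * x - (t ^ 2 + 1)) * Real.cos (t * x)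
      + (t * x + (t ^ 2 + 1)) * Real.sin (t * x)) :
    ∀ t : ℝ, (∫ x, Ψ t x ∂(gaussianReal 0 1)) = -Real.exp (-t ^ 2 / 2) := by
  intro t
  obtain ⟨hcos, hsin⟩ := gauss_cos_sin t
  have icos : Integrable (fun x => Real.cos (t*x) * E' x) :=
    int_bdd _ 1 (by continuity) fun x => Real.abs_cos_le_one _
  have isin : Integrable (fun x => Real.sin (t*x) * E' x) :=
    int_bdd _ 1 (by continuity) fun x => Real.abs_sin_le_one _
  have ics : Integrable (fun x => (Real.cos (t*x) - Real.sin (t*x)) * E' x) := by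
    refine int_bdd _ 2 (by fun_prop) fun x => ?_
    have := Real.abs_cos_le_one (t*x); have := Real.abs_sin_le_one (t*x)
    calc |Real.cos (t*x) - Real.sin (t*x)| ≤ |Real.cos (t*x)| + |Real.sin (t*x)| := abs_sub _ _
      _ ≤ 2 := by linarith
  have iΨ : Integrable (fun x => Ψ t x * E' x) := by
    have heq : (fun x => Ψ t x * E' x) = fun x =>
        (t*Real.cos (t*x) + t*Real.sin (t*x)) * (x * E' x)
        + ((t^2+1)*(Real.sin (t*x) - Real.cos (t*x))) * E' x := by
      funext x; rw [hΨ]; ring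
    rw [heq]
    refine (int_bdd_x _ (|t|+|t|) (by fun_prop) fun x => ?_).add
      (int_bdd _ ((t^2+1)*2) (by fun_prop) fun x => ?_)
    · refine (abs_add_le _ _).trans (add_le_add ?_ ?_)
      · rw [abs_mul]
        exact mul_le_of_le_one_right (abs_nonneg t) (Real.abs_cos_le_one _)
      · rw [abs_mul]
        exact mul_le_of_le_one_right (abs_nonneg t) (Real.abs_sin_le_one _)
    · rw [abs_mul, _root_.abs_of_nonneg (by positivity : (0:ℝ) ≤ t^2+1)]
      refine mul_le_mul_of_nonneg_left ?_ (by positivity)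
      have := Real.abs_cos_le_one (t*x); have := Real.abs_sin_le_one (t*x)
      calc |Real.sin (t*x) - Real.cos (t*x)| ≤ |Real.sin (t*x)| + |Real.cos (t*x)| := abs_sub _ _
        _ ≤ 2 := by linarith
  have iFd : Integrable (fun x => ((t*x - (t^2+1)) * Real.cos (t*x)
      + (t*x + (t^2+1)) * Real.sin (t*x) + Real.cos (t*x) - Real.sin (t*x)) * E' x) := by
    refine (iΨ.add ics).congr (Filter.Eventually.of_forall fun x => ?_)
    simp only [Pi.add_apply]
    rw [hΨ]; ring
  have hint0 : (∫ x : ℝ, ((t*x - (t^2+1)) * Real.cos (t*x)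
      + (t*x + (t^2+1)) * Real.sin (t*x) + Real.cos (t*x) - Real.sin (t*x)) * E' x) = 0 := by
    have h1 := integral_Ioi_of_hasDerivAt_of_tendsto (a := (0:ℝ))
      (hasDerivF t 0).continuousAt.continuousWithinAt
      (fun x _ => hasDerivF t x) iFd.integrableOn (tendsF t _ tendsE_top)
    have h2 := integral_Iic_of_hasDerivAt_of_tendsto (a := (0:ℝ))
      (hasDerivF t 0).continuousAt.continuousWithinAt
      (fun x _ => hasDerivF t x) iFd.integrableOn (tendsF t _ tendsE_bot)
    rw [← intervalIntegral.integral_Iic_add_Ioi (b := (0:ℝ)) iFd.integrableOn iFd.integrableOn,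
      h1, h2]
    ring
  have key : (∫ x, Ψ t x * E' x) = -(Real.sqrt (2*π) * Real.exp (-t^2/2)) := by
    have heq : (fun x => Ψ t x * E' x)
        = fun x => ((t*x - (t^2+1)) * Real.cos (t*x)
          + (t*x + (t^2+1)) * Real.sin (t*x) + Real.cos (t*x) - Real.sin (t*x)) * E' x
          - (Real.cos (t*x) - Real.sin (t*x)) * E' x := by
      funext x; rw [hΨ]; ring
    have hcs : (∫ x : ℝ, (Real.cos (t*x) - Real.sin (t*x)) * E' x)
        = Real.sqrt (2*π) * Real.exp (-t^2/2) := by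
      rw [show (fun x : ℝ => (Real.cos (t*x) - Real.sin (t*x)) * E' x)
          = fun x : ℝ => Real.cos (t*x) * E' x - Real.sin (t*x) * E' x from funext fun x => by ring,
        integral_sub icos isin, hcos, hsin]
      ring
    rw [heq, integral_sub iFd ics, hint0, hcs]
    ring
  rw [gaussianReal_of_var_ne_zero 0 one_ne_zero]
  rw [show gaussianPDF 0 1 = fun x => ((Real.toNNReal (gaussianPDFReal 0 1 x) : ℝ≥0) : ℝ≥0∞) from rfl]
  rw [integral_withDensity_eq_integral_smul (measurable_gaussianPDFReal 0 1).real_toNNReal]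
  have hpdf : ∀ x, Real.toNNReal (gaussianPDFReal 0 1 x) • Ψ t x
      = (Real.sqrt (2*π))⁻¹ * (Ψ t x * E' x) := by
    intro x
    rw [NNReal.smul_def, smul_eq_mul, Real.coe_toNNReal _ (gaussianPDFReal_nonneg 0 1 x)]
    unfold gaussianPDFReal E'
    push_cast
    ring_nf
  simp_rw [hpdf]
  rw [integral_const_mul, key]
  have h2 : Real.sqrt (2*π) ≠ 0 := by positivity
  field_simp
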